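/- Let A be a commutative associative algebra over a field of characteristic 0, and let {·,...,·} be an n-linear bracket on A satisfying the Leibniz rule in each argument. If one replaces an argument f_i (for i ≤ n-1) in the Filippov identity by f_i²/2 and subtracts f_i times the Filippov identity, one obtains the identity: ∑_{k=1}^n {f_1,...,f_{n-1},g_k}·{g_1,...,g_{k-1},f_i,g_{k+1},...,g_n} = 0 for all f_1,...,f_{n-1},g_1,...,g_n ∈ A and all i = 1,...,n-1. -/

import Mathlib

/-- For an `n`-linear bracket on a commutative associative algebra `A`
over a field of characteristic 0 satisfying the Leibniz rule in each argument and
the Filippov identity, the identity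
`∑ₖ {f₁,…,f_{n-1},g_k}·{g₁,…,g_{k-1},f_i,g_{k+1},…,g_n} = 0`
holds for all arguments and all `i = 1,…,n-1`. Here the arity is `n + 1`. -/
theorem stmt0 {K A : Type*} [Field K] [CharZero K] [CommRing A] [Algebra K A]
    (n : ℕ) (br : MultilinearMap K (fun _ : Fin (n + 1) => A) A)
    (hLeib : ∀ (f : Fin (n + 1) → A) (i : Fin (n + 1)) (x y : A),
      br (Function.update f i (x * y)) =
        x * br (Function.update f i y) + br (Function.update f i x) * y)
    (hFil : ∀ (f g : Fin (n + 1) → A),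
      br (Function.update f (Fin.last n) (br g)) =
        ∑ k : Fin (n + 1),
          br (Function.update g k (br (Function.update f (Fin.last n) (g k))))) :
    ∀ (f g : Fin (n + 1) → A) (i : Fin (n + 1)), i ≠ Fin.last n →
      ∑ k : Fin (n + 1),
        br (Function.update f (Fin.last n) (g k)) * br (Function.update g k (f i)) = 0 := by
  intro f g i hi
  set fi := f i with hfi
  -- key: plugging fi*fi at slot i doubles the bracket
  have key : ∀ x : A,
      br (Function.update (Function.update f i (fi * fi)) (Fin.last n) x) =
        2 * (fi * br (Function.update f (Fin.last n) x)) := by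
    intro x
    rw [Function.update_comm hi, hLeib]
    have h1 : Function.update (Function.update f (Fin.last n) x) i fi =
        Function.update f (Fin.last n) x := by
      rw [hfi, ← Function.update_of_ne hi x f, Function.update_eq_self]
    rw [h1]; ring
  -- expand each summand on the RHS
  have expand : ∀ k : Fin (n + 1),
      br (Function.update g k
        (2 * (fi * br (Function.update f (Fin.last n) (g k))))) =
      2 * (fi * br (Function.update g k (br (Function.update f (Fin.last n) (g k)))))
        + 2 * (br (Function.update g k fi) * br (Function.update f (Fin.last n) (g k))) := by
    intro k
    have h2 : (2 : A) * (fi * br (Function.update f (Fin.last n) (g k))) =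
        fi * br (Function.update f (Fin.last n) (g k))
          + fi * br (Function.update f (Fin.last n) (g k)) := by ring
    rw [h2, br.map_update_add, hLeib]; ring
  have H := hFil (Function.update f i (fi * fi)) g
  rw [key] at H
  simp only [key, expand, Finset.sum_add_distrib, ← Finset.mul_sum] at H
  rw [← hFil] at H
  have H2 : (2 : A) * ∑ k : Fin (n + 1),
      br (Function.update f (Fin.last n) (g k)) * br (Function.update g k fi) = 0 := by
    have h0 := left_eq_add.mp H
    rw [← h0]
    congr 1
    apply Finset.sum_congr rfl
    intro k _
    ring
  -- kill the factor 2 using char zero of K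
  have h3 : (2 : A) * (∑ k : Fin (n + 1),
      br (Function.update f (Fin.last n) (g k)) * br (Function.update g k fi)) =
      (2 : K) • (∑ k : Fin (n + 1),
      br (Function.update f (Fin.last n) (g k)) * br (Function.update g k fi)) := by
    rw [Algebra.smul_def, map_ofNat]
  rw [h3] at H2
  have := smul_eq_zero.mp H2
  rcases this with h | h
  · exact absurd h (by norm_num)
  · exact h
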